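/- Let E be a real normed vector space, let 0 < β ≤ 1, let C ≥ 1, and let n ≥ 1. Suppose g_0, …, g_{n−1} : E → E are maps, each differentiable at every point of E, such that ‖Dg_i(x)‖ ≤ C for all x ∈ E and ‖Dg_i(x) − Dg_i(y)‖ ≤ C ‖x − y‖^β for all x, y ∈ E and all 0 ≤ i ≤ n−1. Let h = g_{n−1} ∘ g_{n−2} ∘ ⋯ ∘ g_0. Then h is differentiable at every point of E and: (1) ‖Dh(x)‖ ≤ C^n for every x ∈ E; and (2) ‖Dh(x) − Dh(y)‖ ≤ n · C^{n(1+β)} · ‖x − y‖^β for all x, y ∈ E. -/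

import Mathlib

open Real

theorem aux_comp {E : Type*} [NormedAddCommGroup E] [NormedSpace ℝ E]
    (β : ℝ) (hβ0 : 0 < β) (C : ℝ) (hC : 1 ≤ C)
    (L : List ((E → E) × (E → (E →L[ℝ] E))))
    (hL : ∀ p ∈ L, (∀ x, HasFDerivAt p.1 (p.2 x) x) ∧ (∀ x, ‖p.2 x‖ ≤ C) ∧
      (∀ x y, ‖p.2 x - p.2 y‖ ≤ C * ‖x - y‖ ^ β)) :
    ∃ D : E → (E →L[ℝ] E),
      (∀ x, HasFDerivAt (fun x => L.foldl (fun y f => f.1 y) x) (D x) x) ∧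
      (∀ x, ‖D x‖ ≤ C ^ L.length) ∧
      (∀ x y, ‖D x - D y‖ ≤ (L.length : ℝ) * C ^ ((L.length : ℝ) * (1 + β)) * ‖x - y‖ ^ β) := by
  have hC0 : (0 : ℝ) < C := lt_of_lt_of_le one_pos hC
  induction L using List.reverseRecOn with
  | nil =>
      refine ⟨fun _ => ContinuousLinearMap.id ℝ E, fun x => hasFDerivAt_id x, ?_, ?_⟩
      · intro x; simpa using ContinuousLinearMap.norm_id_le
      · intro x y; simp
  | append_singleton L p ih =>
      obtain ⟨D, hD, hDb, hDh⟩ := ih (fun q hq => hL q (by simp [hq]))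
      obtain ⟨hp1, hp2, hp3⟩ := hL p (by simp)
      set k := L.length with hk
      set hF : E → E := fun x => L.foldl (fun y f => f.1 y) x with hFdef
      have hlip : ∀ x y : E, ‖hF x - hF y‖ ≤ C ^ k * ‖x - y‖ := by
        intro x y
        have := Convex.norm_image_sub_le_of_norm_hasFDerivWithin_le
          (f := hF) (f' := D) (s := Set.univ)
          (fun z _ => (hD z).hasFDerivWithinAt) (fun z _ => hDb z) convex_univ
          (Set.mem_univ y) (Set.mem_univ x)
        simpa using this
      refine ⟨fun x => (p.2 (hF x)).comp (D x), ?_, ?_, ?_⟩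
      · intro x
        have : HasFDerivAt (fun x => p.1 (hF x)) ((p.2 (hF x)).comp (D x)) x :=
          (hp1 (hF x)).comp x (hD x)
        simpa [List.foldl_append] using this
      · intro x
        calc ‖(p.2 (hF x)).comp (D x)‖ ≤ ‖p.2 (hF x)‖ * ‖D x‖ :=
              ContinuousLinearMap.opNorm_comp_le _ _
          _ ≤ C * C ^ k :=
              mul_le_mul (hp2 _) (hDb x) (norm_nonneg _) hC0.le
          _ = C ^ (L ++ [p]).length := by
              simp [pow_succ, mul_comm, hk]
      · intro x y
        have hsplit : (p.2 (hF x)).comp (D x) - (p.2 (hF y)).comp (D y)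
            = (p.2 (hF x) - p.2 (hF y)).comp (D x) + (p.2 (hF y)).comp (D x - D y) := by
          ext v; simp [ContinuousLinearMap.comp_apply]
        have hterm1 : ‖(p.2 (hF x) - p.2 (hF y)).comp (D x)‖
            ≤ (C * ‖hF x - hF y‖ ^ β) * C ^ k :=
          le_trans (ContinuousLinearMap.opNorm_comp_le _ _)
            (mul_le_mul (hp3 _ _) (hDb x) (norm_nonneg _)
              (by positivity))
        have hterm2 : ‖(p.2 (hF y)).comp (D x - D y)‖
            ≤ C * ((k : ℝ) * C ^ ((k : ℝ) * (1 + β)) * ‖x - y‖ ^ β) :=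
          le_trans (ContinuousLinearMap.opNorm_comp_le _ _)
            (mul_le_mul (hp2 _) (hDh x y) (norm_nonneg _) hC0.le)
        have hhol : ‖hF x - hF y‖ ^ β ≤ C ^ ((k : ℝ) * β) * ‖x - y‖ ^ β := by
          calc ‖hF x - hF y‖ ^ β ≤ (C ^ k * ‖x - y‖) ^ β :=
                Real.rpow_le_rpow (norm_nonneg _) (hlip x y) hβ0.le
            _ = (C ^ k : ℝ) ^ β * ‖x - y‖ ^ β :=
                Real.mul_rpow (by positivity) (norm_nonneg _)
            _ = C ^ ((k : ℝ) * β) * ‖x - y‖ ^ β := by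
                rw [← Real.rpow_natCast C k, ← Real.rpow_mul hC0.le]
        have hlen : ((L ++ [p]).length : ℝ) = (k : ℝ) + 1 := by simp [hk]
        rw [hsplit]
        have key : (C * (C ^ ((k:ℝ) * β) * ‖x - y‖ ^ β)) * C ^ k
            + C * ((k : ℝ) * C ^ ((k : ℝ) * (1 + β)) * ‖x - y‖ ^ β)
            ≤ ((k : ℝ) + 1) * C ^ (((k : ℝ) + 1) * (1 + β)) * ‖x - y‖ ^ β := by
          have hCk : (C ^ k : ℝ) = C ^ (k : ℝ) := (Real.rpow_natCast C k).symm
          have e1 : C * C ^ ((k:ℝ) * β) * C ^ (k : ℝ) = C ^ ((k:ℝ) * (1 + β) + 1) := by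
            rw [show ((k:ℝ) * (1 + β) + 1) = 1 + ((k:ℝ) * β + (k:ℝ)) by ring,
              Real.rpow_add hC0, Real.rpow_add hC0, Real.rpow_one]
            ring
          have e2 : C ^ ((k:ℝ) * (1 + β) + 1) ≤ C ^ (((k:ℝ) + 1) * (1 + β)) := by
            apply Real.rpow_le_rpow_of_exponent_le hC
            nlinarith [hβ0.le]
          have ht : (0:ℝ) ≤ ‖x - y‖ ^ β := by positivity
          have hkk : (0:ℝ) ≤ (k:ℝ) := Nat.cast_nonneg k
          calc (C * (C ^ ((k:ℝ) * β) * ‖x - y‖ ^ β)) * C ^ k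
              + C * ((k : ℝ) * C ^ ((k : ℝ) * (1 + β)) * ‖x - y‖ ^ β)
              = (C ^ ((k:ℝ) * (1 + β) + 1) + (k:ℝ) * (C ^ ((k:ℝ) * (1+β)) * C)) * ‖x - y‖ ^ β := by
                rw [hCk, ← e1]; ring
            _ ≤ (((k:ℝ) + 1) * C ^ (((k:ℝ) + 1) * (1 + β))) * ‖x - y‖ ^ β := by
                apply mul_le_mul_of_nonneg_right _ ht
                have e3 : C ^ ((k:ℝ) * (1+β)) * C = C ^ ((k:ℝ) * (1 + β) + 1) := by
                  rw [Real.rpow_add hC0, Real.rpow_one]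
                rw [e3]
                nlinarith [e2, Real.rpow_nonneg hC0.le ((k:ℝ) * (1 + β) + 1)]
            _ = ((k : ℝ) + 1) * C ^ (((k : ℝ) + 1) * (1 + β)) * ‖x - y‖ ^ β := by ring
        rw [hlen]
        calc ‖(p.2 (hF x) - p.2 (hF y)).comp (D x) + (p.2 (hF y)).comp (D x - D y)‖
            ≤ (C * ‖hF x - hF y‖ ^ β) * C ^ k
              + C * ((k : ℝ) * C ^ ((k : ℝ) * (1 + β)) * ‖x - y‖ ^ β) :=
              le_trans (norm_add_le _ _) (add_le_add hterm1 hterm2)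
          _ ≤ (C * (C ^ ((k:ℝ) * β) * ‖x - y‖ ^ β)) * C ^ k
              + C * ((k : ℝ) * C ^ ((k : ℝ) * (1 + β)) * ‖x - y‖ ^ β) := by
              gcongr
          _ ≤ ((k : ℝ) + 1) * C ^ (((k : ℝ) + 1) * (1 + β)) * ‖x - y‖ ^ β := key

/-- If `g_0, …, g_{n-1} : E → E` are everywhere differentiable with derivatives bounded
in operator norm by `C ≥ 1` and `β`-Hölder with constant `C`, then the composition
`h = g_{n-1} ∘ ⋯ ∘ g_0` is everywhere differentiable, `‖Dh(x)‖ ≤ C^n`, and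
`Dh` is `β`-Hölder with constant `n·C^{n(1+β)}`. -/
theorem stmt1 {E : Type*} [NormedAddCommGroup E] [NormedSpace ℝ E]
    (β : ℝ) (hβ0 : 0 < β) (hβ1 : β ≤ 1) (C : ℝ) (hC : 1 ≤ C)
    (n : ℕ) (hn : 1 ≤ n) (g : Fin n → E → E)
    (Dg : Fin n → E → (E →L[ℝ] E))
    (hdiff : ∀ i x, HasFDerivAt (g i) (Dg i x) x)
    (hbound : ∀ i x, ‖Dg i x‖ ≤ C)
    (hHolder : ∀ i x y, ‖Dg i x - Dg i y‖ ≤ C * ‖x - y‖ ^ β) :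
    let h : E → E := fun x => (List.ofFn g).foldl (fun (y : E) (f : E → E) => f y) x
    (∀ x, DifferentiableAt ℝ h x) ∧
    (∀ x, ‖fderiv ℝ h x‖ ≤ C ^ n) ∧
    (∀ x y, ‖fderiv ℝ h x - fderiv ℝ h y‖ ≤
      (n : ℝ) * C ^ ((n : ℝ) * (1 + β)) * ‖x - y‖ ^ β) := by
  intro h
  set L : List ((E → E) × (E → (E →L[ℝ] E))) := List.ofFn (fun i => (g i, Dg i)) with hLdef
  obtain ⟨D, hD, hDb, hDh⟩ := aux_comp β hβ0 C hC L (by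
    intro p hp
    rw [hLdef, List.mem_ofFn] at hp
    obtain ⟨i, rfl⟩ := hp
    exact ⟨hdiff i, hbound i, hHolder i⟩)
  have hlen : L.length = n := by simp [hLdef]
  have hfold : ∀ x : E, h x = L.foldl (fun y f => f.1 y) x := by
    intro x
    show (List.ofFn g).foldl (fun (y : E) (f : E → E) => f y) x = _
    have : List.ofFn g = L.map Prod.fst := by rw [hLdef, List.map_ofFn]; rfl
    rw [this, List.foldl_map]
  have hfun : h = fun x => L.foldl (fun y f => f.1 y) x := funext hfold
  have hD' : ∀ x, HasFDerivAt h (D x) x := by rw [hfun]; exact hD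
  have hfd : ∀ x, fderiv ℝ h x = D x := fun x => (hD' x).fderiv
  refine ⟨fun x => (hD' x).differentiableAt, ?_, ?_⟩
  · intro x; rw [hfd]; rw [← hlen]; exact hDb x
  · intro x y; rw [hfd, hfd, ← hlen]
    exact_mod_cast hDh x y
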